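/- Let k ≥ 1, M ≥ 0, C ≥ 0, let f : (0,∞) → ℝ and let c₁,…,c_k : (0,∞) → ℝ satisfy |c_j(ρ₀)| ≤ M for all 1 ≤ j ≤ k and ρ₀ > 0. Assume the uniform one-sided expansion: |f(ρ₀ + ρ) − f(ρ₀) − ∑_{j=1}^{k} c_j(ρ₀) ρ^j / j!| ≤ C ρ^{k+1} for all ρ₀ > 0 and ρ ∈ (0,1]. Then there exists a constant C′ depending only on k, M and C such that for every 1 ≤ ℓ ≤ k, every ρ₀ > 0 and every ρ ∈ (0, 1/k]: |Δ^{ℓ,ρ}f(ρ₀) − c_ℓ(ρ₀) ρ^ℓ| ≤ C′ ρ^{ℓ+1}. -/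

import Mathlib

open Finset

noncomputable def Saux (ℓ j : ℕ) : ℝ :=
  ∑ i ∈ Finset.range (ℓ + 1), (ℓ.choose i : ℝ) * (-1 : ℝ) ^ (ℓ - i) * (i : ℝ) ^ j

lemma fwdDiff_monomial (j : ℕ) :
    fwdDiff (1:ℕ) (fun n : ℕ ↦ (n:ℝ)^j)
      = fun n : ℕ ↦ ∑ m ∈ Finset.range j, (n:ℝ)^m * (j.choose m : ℝ) := by
  funext n
  have h : ((n:ℝ) + 1)^j = ∑ m ∈ Finset.range (j+1), (n:ℝ)^m * (j.choose m : ℝ) := by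
    rw [add_pow]; simp
  simp only [fwdDiff, Nat.cast_add, Nat.cast_one, h, Finset.sum_range_succ, Nat.choose_self,
    Nat.cast_one, mul_one, add_sub_cancel_right]

lemma fd_lt : ∀ ℓ : ℕ, ∀ j < ℓ, (fwdDiff (1:ℕ))^[ℓ] (fun n : ℕ ↦ (n:ℝ)^j) = fun _ ↦ 0 := by
  intro ℓ
  induction ℓ with
  | zero => intro j hj; omega
  | succ ℓ ih =>
    intro j hj
    rw [Function.iterate_succ_apply, fwdDiff_monomial]
    have : (fun n : ℕ ↦ ∑ m ∈ Finset.range j, (n:ℝ)^m * (j.choose m : ℝ))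
        = ∑ m ∈ Finset.range j, (j.choose m : ℝ) • (fun n : ℕ ↦ (n:ℝ)^m) := by
      funext n; simp [Finset.sum_apply, mul_comm]
    rw [this, fwdDiff_iter_finset_sum]
    funext x
    rw [Finset.sum_apply]
    apply Finset.sum_eq_zero
    intro m hm
    have hmℓ : m < ℓ := lt_of_lt_of_le (Finset.mem_range.mp hm) (by omega)
    rw [fwdDiff_iter_const_smul, ih m hmℓ]
    simp

lemma fd_eq : ∀ ℓ : ℕ, (fwdDiff (1:ℕ))^[ℓ] (fun n : ℕ ↦ (n:ℝ)^ℓ) = fun _ ↦ (ℓ.factorial : ℝ) := by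
  intro ℓ
  induction ℓ with
  | zero => funext x; simp
  | succ ℓ ih =>
    rw [Function.iterate_succ_apply, fwdDiff_monomial]
    have : (fun n : ℕ ↦ ∑ m ∈ Finset.range (ℓ+1), (n:ℝ)^m * ((ℓ+1).choose m : ℝ))
        = ∑ m ∈ Finset.range (ℓ+1), (((ℓ+1).choose m : ℝ)) • (fun n : ℕ ↦ (n:ℝ)^m) := by
      funext n; simp [Finset.sum_apply, mul_comm]
    rw [this, fwdDiff_iter_finset_sum]
    funext x
    rw [Finset.sum_apply, Finset.sum_range_succ]
    have h0 : ∀ m ∈ Finset.range ℓ,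
        ((fwdDiff (1:ℕ))^[ℓ] (((ℓ+1).choose m : ℝ) • fun n : ℕ ↦ (n:ℝ)^m)) x = 0 := by
      intro m hm
      rw [fwdDiff_iter_const_smul, fd_lt ℓ m (Finset.mem_range.mp hm)]
      simp
    rw [Finset.sum_congr rfl h0, Finset.sum_const_zero, zero_add, fwdDiff_iter_const_smul, ih]
    simp [Nat.choose_succ_self_right, Nat.factorial_succ]

lemma Saux_eq (ℓ j : ℕ) : Saux ℓ j = (fwdDiff (1:ℕ))^[ℓ] (fun n : ℕ ↦ (n:ℝ)^j) 0 := by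
  rw [fwdDiff_iter_eq_sum_shift]
  unfold Saux
  apply Finset.sum_congr rfl
  intro i hi
  simp only [zero_add, smul_eq_mul, zsmul_eq_mul, smul_eq_mul]
  push_cast
  ring

lemma Saux_lt {ℓ j : ℕ} (h : j < ℓ) : Saux ℓ j = 0 := by
  rw [Saux_eq, fd_lt ℓ j h]

lemma Saux_self (ℓ : ℕ) : Saux ℓ ℓ = (ℓ.factorial : ℝ) := by
  rw [Saux_eq, fd_eq ℓ]


/-- The `ℓ`-th order forward difference of `g` at `x` with step size `ρ`. -/
noncomputable def forwardDiff (g : ℝ → ℝ) (ℓ : ℕ) (ρ : ℝ) (x : ℝ) : ℝ :=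
  ∑ i ∈ Finset.range (ℓ + 1),
    (ℓ.choose i : ℝ) * (-1 : ℝ) ^ (ℓ - i) * g (x + (i : ℝ) * ρ)

/-- a uniform one-sided `k`-th order expansion of `f` with coefficient
functions bounded by `M` implies, with a constant `C'` depending only on `k`, `M`, `C`,
that `|Δ^{ℓ,ρ}f(ρ₀) − c_ℓ(ρ₀) ρ^ℓ| ≤ C' ρ^{ℓ+1}` for all `1 ≤ ℓ ≤ k`, `ρ₀ > 0` and
`ρ ∈ (0, 1/k]`. -/



theorem forward_difference_expansion (k : ℕ) (hk : 1 ≤ k) (M C : ℝ)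
    (hM : 0 ≤ M) (hC : 0 ≤ C) :
    ∃ C' : ℝ, 0 ≤ C' ∧
      ∀ (f : ℝ → ℝ) (c : ℕ → ℝ → ℝ),
        (∀ j : ℕ, 1 ≤ j → j ≤ k → ∀ ρ₀ : ℝ, 0 < ρ₀ → |c j ρ₀| ≤ M) →
        (∀ ρ₀ : ℝ, 0 < ρ₀ → ∀ ρ : ℝ, 0 < ρ → ρ ≤ 1 →
          |f (ρ₀ + ρ) - f ρ₀ -
              ∑ j ∈ Finset.Icc 1 k, c j ρ₀ * ρ ^ j / (Nat.factorial j : ℝ)| ≤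
            C * ρ ^ (k + 1)) →
        ∀ ℓ : ℕ, 1 ≤ ℓ → ℓ ≤ k → ∀ ρ₀ : ℝ, 0 < ρ₀ →
          ∀ ρ : ℝ, 0 < ρ → ρ ≤ 1 / (k : ℝ) →
            |forwardDiff f ℓ ρ ρ₀ - c ℓ ρ₀ * ρ ^ ℓ| ≤ C' * ρ ^ (ℓ + 1) := by
  refine ⟨2^k * (k:ℝ)^(k+1) * (M + C), by positivity, ?_⟩
  intro f c hMc hexp ℓ hℓ1 hℓk ρ₀ hρ₀ ρ hρ hρk
  have hk0 : (0:ℝ) < k := by exact_mod_cast Nat.pos_of_ne_zero (by omega)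
  have hρ1 : ρ ≤ 1 := hρk.trans (by rw [div_le_one hk0]; exact_mod_cast hk)
  have hρ0 : (0:ℝ) ≤ ρ := hρ.le
  set P : ℕ → ℝ := fun i ↦ ∑ j ∈ Finset.Icc 1 k,
      c j ρ₀ * ((i:ℝ)*ρ)^j / (Nat.factorial j : ℝ) with hP
  set E : ℕ → ℝ := fun i ↦ f (ρ₀ + (i:ℝ)*ρ) - f ρ₀ - P i with hE
  have hfi : ∀ i : ℕ, f (ρ₀ + (i:ℝ)*ρ) = f ρ₀ + P i + E i := by
    intro i; simp only [hE]; ring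
  have hEb : ∀ i ∈ Finset.range (ℓ+1), |E i| ≤ C * (k:ℝ)^(k+1) * ρ^(ℓ+1) := by
    intro i hi
    have hik : (i:ℝ) ≤ (k:ℝ) := by
      exact_mod_cast le_trans (Nat.lt_succ_iff.mp (Finset.mem_range.mp hi)) hℓk
    rcases Nat.eq_zero_or_pos i with h0 | hpos
    · have hP0 : P 0 = 0 := by
        apply Finset.sum_eq_zero
        intro j hj
        have hj0 : j ≠ 0 := by have := (Finset.mem_Icc.mp hj).1; omega
        simp [hj0]
      have : E i = 0 := by simp [hE, h0, hP0]
      rw [this, abs_zero]; positivity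
    · have hipos : (0:ℝ) < (i:ℝ) := by exact_mod_cast hpos
      have hiρpos : 0 < (i:ℝ)*ρ := mul_pos hipos hρ
      have hiρ1 : (i:ℝ)*ρ ≤ 1 := by
        calc (i:ℝ)*ρ ≤ (k:ℝ) * (1/(k:ℝ)) :=
              mul_le_mul hik hρk hρ0 hk0.le
          _ = 1 := by field_simp
      have h := hexp ρ₀ hρ₀ ((i:ℝ)*ρ) hiρpos hiρ1
      have heq : |E i| ≤ C * ((i:ℝ)*ρ)^(k+1) := h
      refine heq.trans ?_
      rw [mul_pow, ← mul_assoc]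
      have h1 : (i:ℝ)^(k+1) ≤ (k:ℝ)^(k+1) := pow_le_pow_left₀ hipos.le hik _
      have h2 : ρ^(k+1) ≤ ρ^(ℓ+1) := pow_le_pow_of_le_one hρ0 hρ1 (by omega)
      have hCk : C * (i:ℝ)^(k+1) ≤ C * (k:ℝ)^(k+1) := by
        apply mul_le_mul_of_nonneg_left h1 hC
      calc C * (i:ℝ)^(k+1) * ρ^(k+1) ≤ C * (k:ℝ)^(k+1) * ρ^(k+1) := by
            apply mul_le_mul_of_nonneg_right hCk (by positivity)
        _ ≤ C * (k:ℝ)^(k+1) * ρ^(ℓ+1) := by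
            apply mul_le_mul_of_nonneg_left h2 (by positivity)
  have hw0 : ∑ i ∈ Finset.range (ℓ+1), (ℓ.choose i : ℝ) * (-1:ℝ)^(ℓ-i) = 0 := by
    have h := Saux_lt (show (0:ℕ) < ℓ from hℓ1)
    simpa [Saux] using h
  -- the key algebraic identity
  have e1 : forwardDiff f ℓ ρ ρ₀
      = (∑ i ∈ Finset.range (ℓ+1), (ℓ.choose i : ℝ) * (-1:ℝ)^(ℓ-i)) * f ρ₀
        + (∑ i ∈ Finset.range (ℓ+1), (ℓ.choose i : ℝ) * (-1:ℝ)^(ℓ-i) * P i)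
        + ∑ i ∈ Finset.range (ℓ+1), (ℓ.choose i : ℝ) * (-1:ℝ)^(ℓ-i) * E i := by
    rw [Finset.sum_mul, ← Finset.sum_add_distrib, ← Finset.sum_add_distrib, forwardDiff]
    apply Finset.sum_congr rfl
    intro i _
    rw [hfi i]; ring
  have e2 : ∑ i ∈ Finset.range (ℓ+1), (ℓ.choose i : ℝ) * (-1:ℝ)^(ℓ-i) * P i
      = ∑ j ∈ Finset.Icc 1 k, c j ρ₀ * ρ^j / (Nat.factorial j : ℝ) * Saux ℓ j := by
    calc ∑ i ∈ Finset.range (ℓ+1), (ℓ.choose i : ℝ) * (-1:ℝ)^(ℓ-i) * P i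
        = ∑ i ∈ Finset.range (ℓ+1), ∑ j ∈ Finset.Icc 1 k,
            c j ρ₀ * ρ^j / (Nat.factorial j : ℝ)
              * ((ℓ.choose i : ℝ) * (-1:ℝ)^(ℓ-i) * (i:ℝ)^j) := by
          apply Finset.sum_congr rfl
          intro i _
          rw [hP, Finset.mul_sum]
          apply Finset.sum_congr rfl
          intro j _
          rw [mul_pow]; ring
      _ = ∑ j ∈ Finset.Icc 1 k, ∑ i ∈ Finset.range (ℓ+1),
            c j ρ₀ * ρ^j / (Nat.factorial j : ℝ)
              * ((ℓ.choose i : ℝ) * (-1:ℝ)^(ℓ-i) * (i:ℝ)^j) := Finset.sum_comm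
      _ = ∑ j ∈ Finset.Icc 1 k, c j ρ₀ * ρ^j / (Nat.factorial j : ℝ) * Saux ℓ j := by
          apply Finset.sum_congr rfl
          intro j _
          rw [← Finset.mul_sum, Saux]
  have e3 : ∑ j ∈ Finset.Icc 1 k, c j ρ₀ * ρ^j / (Nat.factorial j : ℝ) * Saux ℓ j
      = (∑ j ∈ Finset.Ioc 0 ℓ, c j ρ₀ * ρ^j / (Nat.factorial j : ℝ) * Saux ℓ j)
        + ∑ j ∈ Finset.Ioc ℓ k, c j ρ₀ * ρ^j / (Nat.factorial j : ℝ) * Saux ℓ j := by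
    rw [Finset.sum_Ioc_consecutive _ (Nat.zero_le ℓ) hℓk]
    congr 1
  have e4 : ∑ j ∈ Finset.Ioc 0 ℓ, c j ρ₀ * ρ^j / (Nat.factorial j : ℝ) * Saux ℓ j
      = c ℓ ρ₀ * ρ^ℓ := by
    rw [Finset.sum_eq_single ℓ]
    · rw [Saux_self]
      have : (Nat.factorial ℓ : ℝ) ≠ 0 := by positivity
      field_simp
    · intro j hj hne
      have hjℓ : j < ℓ := lt_of_le_of_ne (Finset.mem_Ioc.mp hj).2 hne
      rw [Saux_lt hjℓ, mul_zero]
    · intro h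
      exact absurd (Finset.mem_Ioc.mpr ⟨hℓ1, le_refl ℓ⟩) h
  have key : forwardDiff f ℓ ρ ρ₀ - c ℓ ρ₀ * ρ^ℓ
      = (∑ j ∈ Finset.Ioc ℓ k, c j ρ₀ * ρ^j / (Nat.factorial j : ℝ) * Saux ℓ j)
        + ∑ i ∈ Finset.range (ℓ+1), (ℓ.choose i : ℝ) * (-1:ℝ)^(ℓ-i) * E i := by
    rw [e1, e2, e3, e4, hw0]; ring
  rw [key]
  -- bound the two pieces
  have hSb : ∀ j ∈ Finset.Ioc ℓ k, |Saux ℓ j| ≤ 2^k * (k:ℝ)^k := by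
    intro j hj
    have hjk : j ≤ k := (Finset.mem_Ioc.mp hj).2
    calc |Saux ℓ j| ≤ ∑ i ∈ Finset.range (ℓ+1),
          |(ℓ.choose i : ℝ) * (-1:ℝ)^(ℓ-i) * (i:ℝ)^j| := Finset.abs_sum_le_sum_abs _ _
      _ ≤ ∑ i ∈ Finset.range (ℓ+1), (ℓ.choose i : ℝ) * (k:ℝ)^k := by
          apply Finset.sum_le_sum
          intro i hi
          have hik : (i:ℝ) ≤ (k:ℝ) := by
            exact_mod_cast le_trans (Nat.lt_succ_iff.mp (Finset.mem_range.mp hi)) hℓk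
          rw [abs_mul, abs_mul, abs_pow, abs_neg, abs_one, one_pow, mul_one,
            Nat.abs_cast, abs_pow, Nat.abs_cast]
          apply mul_le_mul_of_nonneg_left _ (Nat.cast_nonneg _)
          calc (i:ℝ)^j ≤ (k:ℝ)^j := pow_le_pow_left₀ (Nat.cast_nonneg _) hik _
            _ ≤ (k:ℝ)^k := pow_le_pow_right₀ (by exact_mod_cast hk) hjk
      _ = (∑ i ∈ Finset.range (ℓ+1), (ℓ.choose i : ℝ)) * (k:ℝ)^k := by
          rw [Finset.sum_mul]
      _ = (2:ℝ)^ℓ * (k:ℝ)^k := by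
          norm_cast
          rw [Nat.sum_range_choose]
      _ ≤ 2^k * (k:ℝ)^k := by
          apply mul_le_mul_of_nonneg_right _ (by positivity)
          exact pow_le_pow_right₀ (by norm_num) hℓk
  have hA : |∑ j ∈ Finset.Ioc ℓ k, c j ρ₀ * ρ^j / (Nat.factorial j : ℝ) * Saux ℓ j|
      ≤ (k:ℝ) * (M * ρ^(ℓ+1) * (2^k * (k:ℝ)^k)) := by
    calc |∑ j ∈ Finset.Ioc ℓ k, c j ρ₀ * ρ^j / (Nat.factorial j : ℝ) * Saux ℓ j|
        ≤ ∑ j ∈ Finset.Ioc ℓ k,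
            |c j ρ₀ * ρ^j / (Nat.factorial j : ℝ) * Saux ℓ j| := Finset.abs_sum_le_sum_abs _ _
      _ ≤ ∑ _j ∈ Finset.Ioc ℓ k, M * ρ^(ℓ+1) * (2^k * (k:ℝ)^k) := by
          apply Finset.sum_le_sum
          intro j hj
          obtain ⟨hjℓ, hjk⟩ := Finset.mem_Ioc.mp hj
          have hc := hMc j (by omega) hjk ρ₀ hρ₀
          have hρj : ρ^j ≤ ρ^(ℓ+1) := pow_le_pow_of_le_one hρ0 hρ1 (by omega)
          have hfac : (1:ℝ) ≤ (Nat.factorial j : ℝ) := by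
            exact_mod_cast Nat.one_le_iff_ne_zero.mpr (Nat.factorial_ne_zero j)
          rw [abs_mul, abs_div, abs_mul, abs_of_nonneg (by positivity : (0:ℝ) ≤ ρ^j),
            abs_of_nonneg (by positivity : (0:ℝ) ≤ (Nat.factorial j : ℝ))]
          calc |c j ρ₀| * ρ^j / (Nat.factorial j : ℝ) * |Saux ℓ j|
              ≤ M * ρ^(ℓ+1) / 1 * (2^k * (k:ℝ)^k) := by
                gcongr
                exact hSb j hj
            _ = M * ρ^(ℓ+1) * (2^k * (k:ℝ)^k) := by ring
      _ = ((Finset.Ioc ℓ k).card : ℝ) * (M * ρ^(ℓ+1) * (2^k * (k:ℝ)^k)) := by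
          rw [Finset.sum_const, nsmul_eq_mul]
      _ ≤ (k:ℝ) * (M * ρ^(ℓ+1) * (2^k * (k:ℝ)^k)) := by
          apply mul_le_mul_of_nonneg_right _ (by positivity)
          rw [Nat.card_Ioc]
          exact_mod_cast Nat.sub_le k ℓ
  have hB : |∑ i ∈ Finset.range (ℓ+1), (ℓ.choose i : ℝ) * (-1:ℝ)^(ℓ-i) * E i|
      ≤ 2^k * (C * (k:ℝ)^(k+1) * ρ^(ℓ+1)) := by
    calc |∑ i ∈ Finset.range (ℓ+1), (ℓ.choose i : ℝ) * (-1:ℝ)^(ℓ-i) * E i|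
        ≤ ∑ i ∈ Finset.range (ℓ+1),
            |(ℓ.choose i : ℝ) * (-1:ℝ)^(ℓ-i) * E i| := Finset.abs_sum_le_sum_abs _ _
      _ ≤ ∑ i ∈ Finset.range (ℓ+1),
            (ℓ.choose i : ℝ) * (C * (k:ℝ)^(k+1) * ρ^(ℓ+1)) := by
          apply Finset.sum_le_sum
          intro i hi
          rw [abs_mul, abs_mul, abs_pow, abs_neg, abs_one, one_pow, mul_one, Nat.abs_cast]
          exact mul_le_mul_of_nonneg_left (hEb i hi) (Nat.cast_nonneg _)
      _ = (∑ i ∈ Finset.range (ℓ+1), (ℓ.choose i : ℝ))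
            * (C * (k:ℝ)^(k+1) * ρ^(ℓ+1)) := by rw [Finset.sum_mul]
      _ ≤ 2^k * (C * (k:ℝ)^(k+1) * ρ^(ℓ+1)) := by
          apply mul_le_mul_of_nonneg_right _ (by positivity)
          have : (∑ i ∈ Finset.range (ℓ+1), (ℓ.choose i : ℝ)) = (2:ℝ)^ℓ := by
            norm_cast
            rw [Nat.sum_range_choose]
          rw [this]
          exact pow_le_pow_right₀ (by norm_num) hℓk
  calc |_ + _| ≤ _ := abs_add_le _ _
    _ ≤ (k:ℝ) * (M * ρ^(ℓ+1) * (2^k * (k:ℝ)^k)) + 2^k * (C * (k:ℝ)^(k+1) * ρ^(ℓ+1)) :=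
        add_le_add hA hB
    _ = 2^k * (k:ℝ)^(k+1) * (M + C) * ρ^(ℓ+1) := by
        rw [show (k:ℝ)^(k+1) = (k:ℝ)^k * (k:ℝ) from pow_succ _ _]
        ring
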